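/- Let (Ω,F,P) be a complete probability space and let Φ : [0,∞) → [0,∞) be a convex, lower semi-continuous function with liminf_{x→∞} Φ(x)/x > 0. Then the functional G : L0+ → [0,∞] defined by G(f) = E[Φ(f)] is convex, lower semi-continuous with respect to convergence in probability, has a nonempty, convex, closed and bounded-in-probability lower-contour set, and attains its infimum on L0+. -/

import Mathlib

open MeasureTheory Filter Topology

/-- The set `L0+`: (versions of) nonnegative real-valued random variables. -/
def L0plus {Ω : Type*} [MeasurableSpace Ω] (μ : Measure Ω) : Set (Ω → ℝ) :=
  {f | Measurable f ∧ ∀ᵐ ω ∂μ, 0 ≤ f ω}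

/-- A set of random variables is *bounded in probability* if
`sup_{f ∈ C} P[|f| ≥ M] → 0` as `M → ∞`. -/
def BoundedInProbability {Ω : Type*} [MeasurableSpace Ω] (μ : Measure Ω)
    (C : Set (Ω → ℝ)) : Prop :=
  Tendsto (fun M : ℝ => ⨆ f ∈ C, μ {ω | M ≤ |f ω|}) atTop (nhds 0)

/-- A set of random variables is *closed in probability* (closed for the metrizable
topology of convergence in measure) if it contains every limit in measure of a
sequence of its elements. -/
def ClosedInMeasure {Ω : Type*} [MeasurableSpace Ω] (μ : Measure Ω)
    (C : Set (Ω → ℝ)) : Prop :=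
  ∀ (f : ℕ → Ω → ℝ) (g : Ω → ℝ), (∀ n, f n ∈ C) →
    TendstoInMeasure μ f atTop g → g ∈ C

/-- A convex set `C` of random variables is *convexly compact* (for the topology of
convergence in probability) if every family of closed (in probability) and convex
subsets of `C`, indexed by a nonempty set, with the finite-intersection property has
nonempty total intersection. -/
def ConvexlyCompactInMeasure {Ω : Type*} [MeasurableSpace Ω] (μ : Measure Ω)
    (C : Set (Ω → ℝ)) : Prop :=
  Convex ℝ C ∧
    ∀ (A : Type) (_ : Nonempty A) (F : A → Set (Ω → ℝ)),
      (∀ α, ClosedInMeasure μ (F α)) → (∀ α, Convex ℝ (F α)) → (∀ α, F α ⊆ C) →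
      (∀ D : Finset A, D.Nonempty → (⋂ α ∈ D, F α).Nonempty) →
      (⋂ α, F α).Nonempty

section AuxLemmas

variable {Ω : Type*} [MeasurableSpace Ω] {μ : Measure Ω}

lemma psiMeasurableAux (Φ : ℝ → ℝ) (hΦconv : ConvexOn ℝ (Set.Ici (0:ℝ)) Φ) :
    Measurable (fun x : ℝ => if x ≤ 0 then Φ 0 else Φ x) := by
  have hcont : ContinuousOn Φ (Set.Ioi (0:ℝ)) := by
    have := hΦconv.continuousOn_interior
    rwa [interior_Ici] at this
  apply measurable_of_measurable_union_cover (Set.Iic (0:ℝ)) (Set.Ioi (0:ℝ))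
    measurableSet_Iic measurableSet_Ioi
  · intro x _
    rcases le_or_gt x 0 with h | h
    · exact Or.inl h
    · exact Or.inr h
  · have h : (fun a : Set.Iic (0:ℝ) => if (a : ℝ) ≤ 0 then Φ 0 else Φ (a : ℝ))
        = fun _ => Φ 0 := by
      funext a
      exact if_pos a.2
    rw [h]
    exact measurable_const
  · have h : (fun a : Set.Ioi (0:ℝ) => if (a : ℝ) ≤ 0 then Φ 0 else Φ (a : ℝ))
        = (Set.Ioi (0:ℝ)).restrict Φ := by
      funext a
      exact if_neg (not_le.2 a.2)
    rw [h]
    exact hcont.restrict.measurable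

lemma aemeasOfRealComp (Φ : ℝ → ℝ) (hΦconv : ConvexOn ℝ (Set.Ici (0:ℝ)) Φ)
    {f : Ω → ℝ} (hfm : Measurable f) (hf0 : ∀ᵐ ω ∂μ, 0 ≤ f ω) :
    AEMeasurable (fun ω => ENNReal.ofReal (Φ (f ω))) μ := by
  have hψ := psiMeasurableAux Φ hΦconv
  refine AEMeasurable.congr
    ((ENNReal.measurable_ofReal.comp (hψ.comp hfm)).aemeasurable) ?_
  filter_upwards [hf0] with ω hω
  by_cases h : f ω ≤ 0
  · have h0 : f ω = 0 := le_antisymm h hω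
    simp [Function.comp, h0]
  · simp [Function.comp, h]

lemma existsMinOnIci (Φ : ℝ → ℝ)
    (hΦlsc : LowerSemicontinuousOn Φ (Set.Ici (0:ℝ)))
    (hΦnonneg : ∀ x : ℝ, 0 ≤ x → 0 ≤ Φ x)
    (x₁ : ℝ) (hx₁ : ∀ x, x₁ ≤ x → Φ 0 < Φ x) :
    ∃ x₀, 0 ≤ x₀ ∧ ∀ x, 0 ≤ x → Φ x₀ ≤ Φ x := by
  set M := max x₁ 0 with hM
  have hM0 : (0:ℝ) ≤ M := le_max_right _ _
  have hK : IsCompact (Set.Icc (0:ℝ) M) := isCompact_Icc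
  have hne : (Φ '' Set.Icc 0 M).Nonempty := ⟨Φ 0, ⟨0, ⟨le_refl 0, hM0⟩, rfl⟩⟩
  have hbdd : BddBelow (Φ '' Set.Icc 0 M) := by
    refine ⟨0, ?_⟩
    rintro y ⟨x, hx, rfl⟩
    exact hΦnonneg x hx.1
  obtain ⟨u, -, hu_tendsto, hu_mem⟩ := exists_seq_tendsto_sInf hne hbdd
  choose x hx hxu using hu_mem
  obtain ⟨x₀, hx₀mem, φ, hφ, hφt⟩ := hK.tendsto_subseq hx
  refine ⟨x₀, hx₀mem.1, ?_⟩
  have hΦx₀ : Φ x₀ ≤ sInf (Φ '' Set.Icc 0 M) := by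
    by_contra h
    push_neg at h
    obtain ⟨y, hy1, hy2⟩ := exists_between h
    have hlsc := hΦlsc x₀ hx₀mem.1 y hy2
    have htend : Tendsto (fun k => x (φ k)) atTop (nhdsWithin x₀ (Set.Ici (0:ℝ))) :=
      tendsto_nhdsWithin_of_tendsto_nhds_of_eventually_within _ hφt
        (Eventually.of_forall fun k => (hx (φ k)).1)
    have hev : ∀ᶠ k in atTop, y < Φ (x (φ k)) := htend.eventually hlsc
    have hten : Tendsto (fun k => Φ (x (φ k))) atTop (𝓝 (sInf (Φ '' Set.Icc 0 M))) := by
      have heq : (fun k => Φ (x (φ k))) = fun k => u (φ k) := by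
        funext k; rw [hxu]
      rw [heq]
      exact hu_tendsto.comp hφ.tendsto_atTop
    have : y ≤ sInf (Φ '' Set.Icc 0 M) :=
      ge_of_tendsto hten (hev.mono fun k hk => hk.le)
    exact absurd hy1 (not_lt.2 this)
  intro z hz0
  by_cases hzM : z ≤ M
  · exact hΦx₀.trans (csInf_le hbdd ⟨z, ⟨hz0, hzM⟩, rfl⟩)
  · have h0M : Φ x₀ ≤ Φ 0 := hΦx₀.trans (csInf_le hbdd ⟨0, ⟨le_refl 0, hM0⟩, rfl⟩)
    exact h0M.trans (hx₁ z (le_trans (le_max_left _ _) (not_le.1 hzM).le)).le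

lemma lscCoreAux (μ : Measure Ω)
    (Φ : ℝ → ℝ) (hΦconv : ConvexOn ℝ (Set.Ici (0:ℝ)) Φ)
    (hΦlsc : LowerSemicontinuousOn Φ (Set.Ici (0:ℝ)))
    (f : ℕ → Ω → ℝ) (g : Ω → ℝ)
    (hfm : ∀ n, Measurable (f n)) (hf0 : ∀ n, ∀ᵐ ω ∂μ, 0 ≤ f n ω)
    (hg0 : ∀ᵐ ω ∂μ, 0 ≤ g ω)
    (hfg : TendstoInMeasure μ f atTop g) :
    (∫⁻ ω, ENNReal.ofReal (Φ (g ω)) ∂μ) ≤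
      liminf (fun n => ∫⁻ ω, ENNReal.ofReal (Φ (f n ω)) ∂μ) atTop := by
  rw [le_liminf_iff]
  intro y hy
  by_contra hcon
  rw [not_eventually] at hcon
  have hfreq : ∃ᶠ n in atTop, (∫⁻ ω, ENNReal.ofReal (Φ (f n ω)) ∂μ) ≤ y :=
    hcon.mono fun n hn => not_lt.1 hn
  obtain ⟨φ, hφmono, hφle⟩ := Filter.extraction_of_frequently_atTop hfreq
  have hsub : TendstoInMeasure μ (fun k => f (φ k)) atTop g :=
    fun ε hε => (hfg ε hε).comp hφmono.tendsto_atTop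
  obtain ⟨ns, hns, hae⟩ := hsub.exists_seq_tendsto_ae
  have hptwise : ∀ᵐ ω ∂μ, ENNReal.ofReal (Φ (g ω)) ≤
      liminf (fun k => ENNReal.ofReal (Φ (f (φ (ns k)) ω))) atTop := by
    have hallnn : ∀ᵐ ω ∂μ, ∀ k, 0 ≤ f (φ (ns k)) ω := ae_all_iff.2 fun k => hf0 _
    filter_upwards [hae, hallnn, hg0] with ω hωt hωn hωg
    rw [le_liminf_iff]
    intro z hz
    have hzt : z ≠ ⊤ := (hz.trans ENNReal.ofReal_lt_top).ne
    have hzr : z.toReal < Φ (g ω) := (ENNReal.lt_ofReal_iff_toReal_lt hzt).1 hz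
    have hlsc := hΦlsc (g ω) hωg z.toReal hzr
    have htend : Tendsto (fun k => f (φ (ns k)) ω) atTop (𝓝[Set.Ici (0:ℝ)] (g ω)) :=
      tendsto_nhdsWithin_of_tendsto_nhds_of_eventually_within _ hωt
        (Eventually.of_forall fun k => hωn k)
    have hev : ∀ᶠ k in atTop, z.toReal < Φ (f (φ (ns k)) ω) := htend.eventually hlsc
    refine hev.mono fun k hk => ?_
    rw [← ENNReal.ofReal_toReal hzt]
    exact (ENNReal.ofReal_lt_ofReal_iff (lt_of_le_of_lt ENNReal.toReal_nonneg hk)).2 hk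
  have hmeas : ∀ k, AEMeasurable (fun ω => ENNReal.ofReal (Φ (f (φ (ns k)) ω))) μ :=
    fun k => aemeasOfRealComp Φ hΦconv (hfm _) (hf0 _)
  have h1 : (∫⁻ ω, ENNReal.ofReal (Φ (g ω)) ∂μ) ≤
      ∫⁻ ω, liminf (fun k => ENNReal.ofReal (Φ (f (φ (ns k)) ω))) atTop ∂μ :=
    lintegral_mono_ae hptwise
  have h2 := lintegral_liminf_le' (μ := μ) (u := atTop) hmeas
  have h3 : liminf (fun k => ∫⁻ ω, ENNReal.ofReal (Φ (f (φ (ns k)) ω)) ∂μ) atTop ≤ y :=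
    liminf_le_of_frequently_le' (Frequently.of_forall fun k => hφle (ns k))
  exact absurd hy (not_lt.2 (h1.trans (h2.trans h3)))


end AuxLemmas


/-- If `Φ : [0,∞) → [0,∞)` is convex, lower semi-continuous and
`liminf_{x→∞} Φ(x)/x > 0`, then `G(f) = E[Φ(f)]` is convex on `L0+`, sequentially lower
semi-continuous with respect to convergence in probability, has a nonempty, convex,
closed and bounded-in-probability lower-contour set, and attains its infimum on `L0+`. -/
theorem integral_functional_coercive_attains_inf
    {Ω : Type*} [MeasurableSpace Ω] (μ : Measure Ω) [IsProbabilityMeasure μ]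
    [μ.IsComplete]
    (Φ : ℝ → ℝ)
    (hΦconv : ConvexOn ℝ (Set.Ici (0 : ℝ)) Φ)
    (hΦlsc : LowerSemicontinuousOn Φ (Set.Ici (0 : ℝ)))
    (hΦnonneg : ∀ x : ℝ, 0 ≤ x → 0 ≤ Φ x)
    (hΦgrowth : ∃ δ : ℝ, 0 < δ ∧ ∀ᶠ x : ℝ in atTop, δ ≤ Φ x / x)
    (G : (Ω → ℝ) → ENNReal)
    (hG : ∀ f : Ω → ℝ, G f = ∫⁻ ω, ENNReal.ofReal (Φ (f ω)) ∂μ) :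
    -- `G` is convex on `L0+`
    (∀ f ∈ L0plus μ, ∀ g ∈ L0plus μ, ∀ a b : ℝ, 0 ≤ a → 0 ≤ b → a + b = 1 →
        G (a • f + b • g) ≤ ENNReal.ofReal a * G f + ENNReal.ofReal b * G g) ∧
    -- `G` is lower semi-continuous with respect to convergence in probability
    (∀ (f : ℕ → Ω → ℝ) (g : Ω → ℝ), (∀ n, f n ∈ L0plus μ) → g ∈ L0plus μ →
        TendstoInMeasure μ f atTop g →
        G g ≤ liminf (fun n => G (f n)) atTop) ∧
    -- some lower-contour set is nonempty, convex, closed and bounded in probability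
    (∃ c : ENNReal, {f ∈ L0plus μ | G f ≤ c}.Nonempty ∧
        Convex ℝ {f ∈ L0plus μ | G f ≤ c} ∧
        ClosedInMeasure μ {f ∈ L0plus μ | G f ≤ c} ∧
        BoundedInProbability μ {f ∈ L0plus μ | G f ≤ c}) ∧
    -- `G` attains its infimum on `L0+`
    (∃ f₀ ∈ L0plus μ, ∀ f ∈ L0plus μ, G f₀ ≤ G f) := by
  obtain ⟨δ, hδ, hev⟩ := hΦgrowth
  obtain ⟨x₂, hx₂⟩ := eventually_atTop.1 hev
  -- Φ x ≥ δ x for x ≥ x₂ (and x > 0)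
  have hgrow : ∀ x, x₂ ≤ x → 0 < x → δ * x ≤ Φ x := by
    intro x hx hx0
    exact (le_div_iff₀ hx0).1 (hx₂ x hx)
  -- the coercivity bound giving a min on a compact interval
  have hx₁ : ∀ x, max x₂ ((Φ 0 + 1) / δ) ≤ x → Φ 0 < Φ x := by
    intro x hx
    have hq : (0:ℝ) < (Φ 0 + 1) / δ :=
      div_pos (by linarith [hΦnonneg 0 le_rfl]) hδ
    have hx0 : 0 < x := lt_of_lt_of_le hq (le_trans (le_max_right _ _) hx)
    have h1 : δ * x ≤ Φ x := hgrow x (le_trans (le_max_left _ _) hx) hx0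
    have h2 : δ * ((Φ 0 + 1) / δ) ≤ δ * x :=
      mul_le_mul_of_nonneg_left (le_trans (le_max_right _ _) hx) hδ.le
    have h3 : δ * ((Φ 0 + 1) / δ) = Φ 0 + 1 := by field_simp
    linarith
  obtain ⟨x₀, hx₀0, hx₀min⟩ := existsMinOnIci Φ hΦlsc hΦnonneg _ hx₁
  -- convexity of G
  have hconvG : ∀ f ∈ L0plus μ, ∀ g ∈ L0plus μ, ∀ a b : ℝ, 0 ≤ a → 0 ≤ b → a + b = 1 →
      G (a • f + b • g) ≤ ENNReal.ofReal a * G f + ENNReal.ofReal b * G g := by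
    intro f hf g hg a b ha hb hab
    rw [hG, hG, hG]
    have hpt : ∀ᵐ ω ∂μ, ENNReal.ofReal (Φ ((a • f + b • g) ω)) ≤
        ENNReal.ofReal a * ENNReal.ofReal (Φ (f ω)) +
          ENNReal.ofReal b * ENNReal.ofReal (Φ (g ω)) := by
      filter_upwards [hf.2, hg.2] with ω h1 h2
      have hc := hΦconv.2 (Set.mem_Ici.2 h1) (Set.mem_Ici.2 h2) ha hb hab
      have heq : (a • f + b • g) ω = a * f ω + b * g ω := rfl
      rw [heq]
      calc ENNReal.ofReal (Φ (a * f ω + b * g ω))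
          ≤ ENNReal.ofReal (a * Φ (f ω) + b * Φ (g ω)) :=
            ENNReal.ofReal_le_ofReal (by simpa [smul_eq_mul] using hc)
        _ ≤ ENNReal.ofReal (a * Φ (f ω)) + ENNReal.ofReal (b * Φ (g ω)) :=
            ENNReal.ofReal_add_le
        _ = _ := by rw [ENNReal.ofReal_mul ha, ENNReal.ofReal_mul hb]
    calc (∫⁻ ω, ENNReal.ofReal (Φ ((a • f + b • g) ω)) ∂μ)
        ≤ ∫⁻ ω, (ENNReal.ofReal a * ENNReal.ofReal (Φ (f ω)) +
            ENNReal.ofReal b * ENNReal.ofReal (Φ (g ω))) ∂μ := lintegral_mono_ae hpt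
      _ = ENNReal.ofReal a * (∫⁻ ω, ENNReal.ofReal (Φ (f ω)) ∂μ) +
            ENNReal.ofReal b * (∫⁻ ω, ENNReal.ofReal (Φ (g ω)) ∂μ) := by
          rw [lintegral_add_left'
            ((aemeasOfRealComp Φ hΦconv hf.1 hf.2).const_mul _),
            lintegral_const_mul' _ _ ENNReal.ofReal_ne_top,
            lintegral_const_mul' _ _ ENNReal.ofReal_ne_top]
  -- lower semicontinuity of G
  have hlscG : ∀ (f : ℕ → Ω → ℝ) (g : Ω → ℝ), (∀ n, f n ∈ L0plus μ) → g ∈ L0plus μ →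
      TendstoInMeasure μ f atTop g → G g ≤ liminf (fun n => G (f n)) atTop := by
    intro f g hf hg hfg
    simp only [hG]
    exact lscCoreAux μ Φ hΦconv hΦlsc f g (fun n => (hf n).1) (fun n => (hf n).2) hg.2 hfg
  -- the minimizer
  set c : ENNReal := ENNReal.ofReal (Φ x₀) with hc
  set f₀ : Ω → ℝ := fun _ => x₀ with hf₀def
  have hf₀ : f₀ ∈ L0plus μ := ⟨measurable_const, Eventually.of_forall fun _ => hx₀0⟩
  have hGf₀ : G f₀ = c := by
    rw [hG]
    simp [hf₀def, lintegral_const]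
    exact hc.symm
  have hmin : ∀ f ∈ L0plus μ, c ≤ G f := by
    intro f hf
    rw [hG]
    calc c = ∫⁻ _, c ∂μ := by simp
      _ ≤ _ := lintegral_mono_ae (hf.2.mono fun ω hω =>
          ENNReal.ofReal_le_ofReal (hx₀min _ hω))
  refine ⟨hconvG, hlscG, ⟨c, ⟨f₀, hf₀, hGf₀.le⟩, ?_, ?_, ?_⟩,
    ⟨f₀, hf₀, fun f hf => hGf₀ ▸ hmin f hf⟩⟩
  · -- convexity of the sublevel set
    intro p hp q hq a b ha hb hab
    obtain ⟨⟨hpm, hp0⟩, hpc⟩ := hp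
    obtain ⟨⟨hqm, hq0⟩, hqc⟩ := hq
    have hmem : a • p + b • q ∈ L0plus μ := by
      constructor
      · have heq : a • p + b • q = fun ω => a * p ω + b * q ω := rfl
        rw [heq]
        exact ((hpm.const_mul a).add (hqm.const_mul b))
      · filter_upwards [hp0, hq0] with ω h1 h2
        exact add_nonneg (mul_nonneg ha h1) (mul_nonneg hb h2)
    refine ⟨hmem, ?_⟩
    calc G (a • p + b • q) ≤ ENNReal.ofReal a * G p + ENNReal.ofReal b * G q :=
          hconvG p ⟨hpm, hp0⟩ q ⟨hqm, hq0⟩ a b ha hb hab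
      _ ≤ ENNReal.ofReal a * c + ENNReal.ofReal b * c :=
          add_le_add (mul_le_mul_right hpc _) (mul_le_mul_right hqc _)
      _ = c := by
          rw [← add_mul, ← ENNReal.ofReal_add ha hb, hab, ENNReal.ofReal_one, one_mul]
  · -- closedness of the sublevel set
    intro fs g hfs htim
    have hmemn : ∀ n, fs n ∈ L0plus μ := fun n => (hfs n).1
    have hgm : Measurable g := by
      have : AEMeasurable g μ :=
        TendstoInMeasure.aemeasurable (fun n => (hmemn n).1.aemeasurable) htim
      exact aemeasurable_iff_measurable.mp this
    have hg0 : ∀ᵐ ω ∂μ, 0 ≤ g ω := by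
      obtain ⟨ns, hnsm, hae⟩ := htim.exists_seq_tendsto_ae
      filter_upwards [hae, ae_all_iff.2 fun n => (hmemn n).2] with ω h1 h2
      exact ge_of_tendsto h1 (Eventually.of_forall fun i => h2 (ns i))
    have hgL0 : g ∈ L0plus μ := ⟨hgm, hg0⟩
    refine ⟨hgL0, ?_⟩
    calc G g ≤ liminf (fun n => G (fs n)) atTop := hlscG fs g hmemn hgL0 htim
      _ ≤ c := liminf_le_of_frequently_le' (Frequently.of_forall fun n => (hfs n).2)
  · -- boundedness in probability
    have key : ∀ M : ℝ, max x₂ 1 ≤ M →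
        (⨆ f ∈ {f ∈ L0plus μ | G f ≤ c}, μ {ω | M ≤ |f ω|}) ≤
          c / ENNReal.ofReal (δ * M) := by
      intro M hM
      have hM1 : (1:ℝ) ≤ M := le_trans (le_max_right _ _) hM
      have hMx₂ : x₂ ≤ M := le_trans (le_max_left _ _) hM
      refine iSup₂_le fun f hf => ?_
      obtain ⟨⟨hfm, hf0⟩, hfc⟩ := hf
      have hae : ∀ᵐ ω ∂μ, ω ∈ {ω | M ≤ |f ω|} →
          ω ∈ {ω | ENNReal.ofReal (δ * M) ≤ ENNReal.ofReal (Φ (f ω))} := by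
        filter_upwards [hf0] with ω hω hmem
        have habs : |f ω| = f ω := abs_of_nonneg hω
        have hMf : M ≤ f ω := habs ▸ hmem
        have hf0' : 0 < f ω := lt_of_lt_of_le (by linarith) hMf
        have h1 : δ * f ω ≤ Φ (f ω) := hgrow _ (le_trans hMx₂ hMf) hf0'
        have h2 : δ * M ≤ δ * f ω := mul_le_mul_of_nonneg_left hMf hδ.le
        exact ENNReal.ofReal_le_ofReal (by linarith)
      have hle : μ {ω | M ≤ |f ω|} ≤
          μ {ω | ENNReal.ofReal (δ * M) ≤ ENNReal.ofReal (Φ (f ω))} :=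
        measure_mono_ae hae
      have hmarkov := mul_meas_ge_le_lintegral₀
        (aemeasOfRealComp Φ hΦconv hfm hf0) (ENNReal.ofReal (δ * M))
      have hne0 : ENNReal.ofReal (δ * M) ≠ 0 := by
        simp only [ne_eq, ENNReal.ofReal_eq_zero, not_le]
        nlinarith
      rw [ENNReal.le_div_iff_mul_le (Or.inl hne0) (Or.inl ENNReal.ofReal_ne_top)]
      rw [mul_comm]
      calc ENNReal.ofReal (δ * M) * μ {ω | M ≤ |f ω|}
          ≤ ENNReal.ofReal (δ * M) *
            μ {ω | ENNReal.ofReal (δ * M) ≤ ENNReal.ofReal (Φ (f ω))} :=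
            mul_le_mul_right hle _
        _ ≤ ∫⁻ ω, ENNReal.ofReal (Φ (f ω)) ∂μ := hmarkov
        _ = G f := (hG f).symm
        _ ≤ c := hfc
    have htop : Tendsto (fun M : ℝ => ENNReal.ofReal (δ * M)) atTop (𝓝 ⊤) :=
      ENNReal.tendsto_ofReal_atTop.comp (Tendsto.const_mul_atTop hδ tendsto_id)
    have hinv : Tendsto (fun M : ℝ => (ENNReal.ofReal (δ * M))⁻¹) atTop (𝓝 0) := by
      have := ENNReal.tendsto_inv_iff.2 htop
      simpa using this
    have hlim : Tendsto (fun M : ℝ => c / ENNReal.ofReal (δ * M)) atTop (𝓝 0) := by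
      have := ENNReal.Tendsto.const_mul hinv (Or.inr (ENNReal.ofReal_ne_top (r := Φ x₀)))
      simpa [div_eq_mul_inv] using this
    exact tendsto_of_tendsto_of_tendsto_of_le_of_le' tendsto_const_nhds hlim
      (Eventually.of_forall fun M => zero_le)
      (eventually_atTop.2 ⟨max x₂ 1, key⟩)
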